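/- For ℓ = 1 and r = 0, the number of configurations (sequences m_1 < ... < m_n, m_1 ≥ 1, gaps ≥ 2) of degree d, summed over all n, equals the number of partitions of d into parts with pairwise differences ≥ 2; its generating function is Σ_{n≥0} q^{n²}/(q)_n, the Rogers–Ramanujan sum side. -/

import Mathlib

open Finset PowerSeries

/-- `D d` is the number of partitions of `d` into (distinct) parts with pairwise
differences at least `2`, encoded as finite sets of positive integers whose
elements pairwise differ by at least `2` and which sum to `d`. -/
noncomputable def gapPartitions (d : ℕ) : ℕ :=
  Nat.card {s : Finset ℕ //
    (∀ x ∈ s, 1 ≤ x) ∧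
    (∀ x ∈ s, ∀ y ∈ s, x ≠ y → 2 ≤ ((x : ℤ) - y).natAbs) ∧
    ∑ x ∈ s, x = d}

/-! ### Power series side -/

noncomputable def geomS (m : ℕ) : PowerSeries ℚ :=
  PowerSeries.mk fun j => if m ∣ j then 1 else 0

lemma one_sub_mul_geomS (m : ℕ) (hm : 0 < m) :
    (1 - (X : PowerSeries ℚ) ^ m) * geomS m = 1 := by
  ext d
  rw [sub_mul, one_mul, map_sub, coeff_X_pow_mul', coeff_one]
  simp only [geomS, coeff_mk]
  rcases eq_or_ne d 0 with rfl | hd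
  · simp [(by omega : ¬ m ≤ 0)]
    omega
  · simp only [hd, if_neg hd]
    by_cases h : m ≤ d
    · have : m ∣ d ↔ m ∣ d - m := by
        constructor
        · intro h'; exact (Nat.dvd_sub h' dvd_rfl)
        · intro h'; have := Nat.dvd_add h' (dvd_refl m); rwa [Nat.sub_add_cancel h] at this
      simp only [h, this, ↓reduceIte, sub_self]
    · have : ¬ m ∣ d := fun h' => h (Nat.le_of_dvd (Nat.pos_of_ne_zero hd) h')
      simp [h, this]

lemma inv_prod_eq (n : ℕ) :
    (∏ k ∈ Finset.range n, (1 - (X : PowerSeries ℚ) ^ (k + 1)))⁻¹ =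
      ∏ k ∈ Finset.range n, geomS (k + 1) := by
  rw [PowerSeries.inv_eq_iff_mul_eq_one]
  · rw [← Finset.prod_mul_distrib]
    exact Finset.prod_eq_one fun k _ => by
      rw [mul_comm]; exact one_sub_mul_geomS _ (Nat.succ_pos k)
  · simp [map_prod]

/-- the target finset of multiplicity functions -/
noncomputable def AA (n e : ℕ) : Finset (ℕ →₀ ℕ) :=
  (Finset.finsuppAntidiag (Finset.range n) e).filter fun l => ∀ k ∈ Finset.range n, (k + 1) ∣ l k

lemma coeff_geom_prod (n e : ℕ) :
    coeff e (∏ k ∈ Finset.range n, geomS (k + 1)) = ((AA n e).card : ℚ) := by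
  rw [coeff_prod]
  have h1 : ∀ l ∈ Finset.finsuppAntidiag (Finset.range n) e,
      (∏ k ∈ Finset.range n, coeff (l k) (geomS (k + 1)))
        = if (∀ k ∈ Finset.range n, (k + 1) ∣ l k) then (1 : ℚ) else 0 := by
    intro l _
    simp only [geomS, coeff_mk]
    rw [Finset.prod_boole]
  rw [Finset.sum_congr rfl h1, Finset.sum_boole, AA]

lemma coeff_term (n d : ℕ) :
    coeff d ((X : PowerSeries ℚ) ^ (n ^ 2) *
        (∏ k ∈ Finset.range n, (1 - (X : PowerSeries ℚ) ^ (k + 1)))⁻¹)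
      = if n ^ 2 ≤ d then ((AA n (d - n ^ 2)).card : ℚ) else 0 := by
  rw [inv_prod_eq, coeff_X_pow_mul']
  split
  · rw [coeff_geom_prod]
  · rfl

/-! ### index arithmetic -/

def aFun (n : ℕ) (j : ℕ → ℕ) (i : ℕ) : ℕ := ∑ k ∈ Finset.Ico (n - 1 - i) n, j k

def mFun (n : ℕ) (j : ℕ → ℕ) (i : ℕ) : ℕ := 2 * i + 1 + aFun n j i

lemma aFun_mono (n : ℕ) (j : ℕ → ℕ) {i i' : ℕ} (h : i ≤ i') :
    aFun n j i ≤ aFun n j i' := by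
  apply Finset.sum_le_sum_of_subset
  exact Finset.Ico_subset_Ico (by omega) le_rfl

lemma mFun_gap (n : ℕ) (j : ℕ → ℕ) {i i' : ℕ} (h : i < i') :
    mFun n j i + 2 ≤ mFun n j i' := by
  have := aFun_mono n j h.le
  unfold mFun; omega

lemma sum_odd (n : ℕ) : ∑ i ∈ Finset.range n, (2 * i + 1) = n ^ 2 := by
  induction n with
  | zero => simp
  | succ n ih => rw [Finset.sum_range_succ, ih]; ring

lemma sum_aFun (n : ℕ) (j : ℕ → ℕ) :
    ∑ i ∈ Finset.range n, aFun n j i = ∑ k ∈ Finset.range n, (k + 1) * j k := by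
  have h1 : ∀ i, aFun n j i = ∑ k ∈ Finset.range n, if n - 1 - i ≤ k then j k else 0 := by
    intro i
    rw [Finset.sum_ite, Finset.sum_const_zero, add_zero, aFun]
    apply Finset.sum_congr _ (fun _ _ => rfl)
    ext k
    simp only [Finset.mem_Ico, Finset.mem_filter, Finset.mem_range]
    omega
  simp only [h1]
  rw [Finset.sum_comm]
  apply Finset.sum_congr rfl
  intro k hk
  rw [Finset.sum_ite, Finset.sum_const_zero, add_zero, Finset.sum_const, smul_eq_mul]
  congr 1
  have : Finset.filter (fun i => n - 1 - i ≤ k) (Finset.range n) = Finset.Ico (n - 1 - k) n := by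
    ext i
    simp only [Finset.mem_Ico, Finset.mem_filter, Finset.mem_range]
    omega
  rw [this, Nat.card_Ico]
  simp only [Finset.mem_range] at hk
  omega

lemma sum_mFun (n : ℕ) (j : ℕ → ℕ) :
    ∑ i ∈ Finset.range n, mFun n j i = n ^ 2 + ∑ k ∈ Finset.range n, (k + 1) * j k := by
  unfold mFun
  rw [Finset.sum_add_distrib, sum_odd, sum_aFun]

/-! ### sorted elements of a finset -/

def fEl (s : Finset ℕ) (i : ℕ) : ℕ := (s.sort (· ≤ ·)).getD i 0

lemma fEl_eq {s : Finset ℕ} {n : ℕ} (h : s.card = n) (i : Fin n) :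
    fEl s i = s.orderEmbOfFin h i := by
  rw [Finset.orderEmbOfFin_apply, fEl]
  rw [List.getD_eq_getElem _ _ (by rw [Finset.length_sort, h]; exact i.2)]
  simp [Fin.getElem_fin]

lemma fEl_mem {s : Finset ℕ} {n : ℕ} (h : s.card = n) {i : ℕ} (hi : i < n) :
    fEl s i ∈ s := by
  rw [fEl_eq h ⟨i, hi⟩]; exact Finset.orderEmbOfFin_mem s h _

lemma fEl_strictMono {s : Finset ℕ} {n : ℕ} (h : s.card = n) {i i' : ℕ}
    (hii : i < i') (hi' : i' < n) : fEl s i < fEl s i' := by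
  rw [fEl_eq h ⟨i, hii.trans hi'⟩, fEl_eq h ⟨i', hi'⟩]
  exact (s.orderEmbOfFin h).strictMono (by exact hii)

lemma fEl_unique {s : Finset ℕ} {n : ℕ} (h : s.card = n) (m : ℕ → ℕ)
    (hmem : ∀ i < n, m i ∈ s) (hmono : ∀ i i', i < i' → i' < n → m i < m i') :
    ∀ i < n, fEl s i = m i := by
  intro i hi
  have : (fun i : Fin n => m i) = s.orderEmbOfFin h := by
    apply Finset.orderEmbOfFin_unique h (fun x => hmem x x.2)
    intro a b hab
    exact hmono a b hab b.2
  rw [fEl_eq h ⟨i, hi⟩, ← this]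

lemma fEl_sum {s : Finset ℕ} {n : ℕ} (h : s.card = n) :
    ∑ i ∈ Finset.range n, fEl s i = ∑ x ∈ s, x := by
  rw [← Fin.sum_univ_eq_sum_range]
  have hs : s = Finset.image (fun i : Fin n => s.orderEmbOfFin h i) Finset.univ := by
    ext x
    simp only [Finset.mem_image, Finset.mem_univ, true_and]
    constructor
    · intro hx
      have h2 : x ∈ Set.range ⇑(s.orderEmbOfFin h) := by
        rw [Finset.range_orderEmbOfFin s h]; exact hx
      obtain ⟨i, hi⟩ := h2; exact ⟨i, hi⟩
    · rintro ⟨i, rfl⟩; exact Finset.orderEmbOfFin_mem s h i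
  conv_rhs => rw [hs]
  rw [Finset.sum_image (fun a _ b _ hab => (s.orderEmbOfFin h).injective hab)]
  exact Finset.sum_congr rfl fun i _ => fEl_eq h i

/-! ### the bijection -/

def jOf (n : ℕ) (s : Finset ℕ) (k : ℕ) : ℕ :=
  if k + 1 = n then fEl s 0 - 1 else fEl s (n - 1 - k) - fEl s (n - 2 - k) - 2

def jdiv (l : ℕ →₀ ℕ) (k : ℕ) : ℕ := l k / (k + 1)

noncomputable def phiF (n : ℕ) (s : Finset ℕ) : ℕ →₀ ℕ :=
  Finsupp.onFinset (Finset.range n) (fun k => if k < n then (k + 1) * jOf n s k else 0)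
    (fun k hk => by
      simp only [Finset.mem_range]
      by_contra h
      simp [h] at hk)

def psiF (n : ℕ) (l : ℕ →₀ ℕ) : Finset ℕ := Finset.image (mFun n (jdiv l)) (Finset.range n)

lemma phiF_apply (n : ℕ) (s : Finset ℕ) (k : ℕ) :
    phiF n s k = if k < n then (k + 1) * jOf n s k else 0 := rfl

section gapstruct
variable {s : Finset ℕ} {n : ℕ}
  (hpos : ∀ x ∈ s, 1 ≤ x)
  (hgap : ∀ x ∈ s, ∀ y ∈ s, x ≠ y → 2 ≤ ((x : ℤ) - y).natAbs)
  (hcard : s.card = n)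

include hpos hgap hcard

omit hpos in
lemma fEl_gap : ∀ i i', i < i' → i' < n → fEl s i + 2 ≤ fEl s i' := by
  intro i i' hii hi'
  have h1 : fEl s i < fEl s i' := fEl_strictMono hcard hii hi'
  have hne : fEl s i' ≠ fEl s i := by omega
  have h2 := hgap _ (fEl_mem hcard hi') _ (fEl_mem hcard (hii.trans hi')) hne
  omega

lemma fEl_lb : ∀ i < n, 2 * i + 1 ≤ fEl s i := by
  intro i
  induction i with
  | zero =>
    intro hi
    have := hpos _ (fEl_mem hcard hi)
    omega
  | succ i ih =>
    intro hi
    have h1 := fEl_gap hgap hcard i (i + 1) (by omega) hi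
    have h2 := ih (by omega)
    omega

lemma aFun_jOf : ∀ i < n, fEl s i - (2 * i + 1) = aFun n (jOf n s) i := by
  intro i
  induction i with
  | zero =>
    intro hi
    have h0 : Finset.Ico (n - 1 - 0) n = {n - 1} := by ext x; simp; omega
    rw [aFun, h0, Finset.sum_singleton, jOf, if_pos (by omega)]
  | succ i ih =>
    intro hi
    have h0 : Finset.Ico (n - 1 - (i + 1)) n = insert (n - 2 - i) (Finset.Ico (n - 1 - i) n) := by
      ext x; simp; omega
    rw [aFun, h0, Finset.sum_insert (by simp; omega)]
    have e1 : n - 1 - (n - 2 - i) = i + 1 := by omega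
    have e2 : n - 2 - (n - 2 - i) = i := by omega
    have hjk : jOf n s (n - 2 - i) = fEl s (i + 1) - fEl s i - 2 := by
      rw [jOf, if_neg (by omega), e1, e2]
    rw [hjk, ← aFun, ← ih (by omega)]
    have g1 := fEl_gap hgap hcard i (i + 1) (by omega) hi
    have g2 := fEl_lb hpos hgap hcard i (by omega)
    omega

lemma phiF_sum : ∑ k ∈ Finset.range n, phiF n s k = (∑ x ∈ s, x) - n ^ 2 := by
  have h1 : ∑ k ∈ Finset.range n, phiF n s k
      = ∑ k ∈ Finset.range n, (k + 1) * jOf n s k := by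
    apply Finset.sum_congr rfl
    intro k hk
    rw [phiF_apply, if_pos (Finset.mem_range.1 hk)]
  rw [h1, ← sum_aFun]
  have h2 : ∑ i ∈ Finset.range n, aFun n (jOf n s) i
      = ∑ i ∈ Finset.range n, (fEl s i - (2 * i + 1)) := by
    apply Finset.sum_congr rfl
    intro i hi
    rw [aFun_jOf hpos hgap hcard i (Finset.mem_range.1 hi)]
  have h3 := Finset.sum_tsub_distrib (s := Finset.range n) (f := fEl s)
    (g := fun i => 2 * i + 1) (fun i hi => fEl_lb hpos hgap hcard i (Finset.mem_range.1 hi))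
  rw [h2, h3, sum_odd, fEl_sum hcard]

lemma psiF_phiF : psiF n (phiF n s) = s := by
  have hm : ∀ i < n, mFun n (jdiv (phiF n s)) i = fEl s i := by
    intro i hi
    have ha : aFun n (jdiv (phiF n s)) i = aFun n (jOf n s) i := by
      apply Finset.sum_congr rfl
      intro k hk
      simp only [Finset.mem_Ico] at hk
      rw [jdiv, phiF_apply, if_pos hk.2, Nat.mul_div_cancel_left _ (Nat.succ_pos k)]
    rw [mFun, ha, ← aFun_jOf hpos hgap hcard i hi]
    have := fEl_lb hpos hgap hcard i hi
    omega
  have himg : psiF n (phiF n s) = Finset.image (fEl s) (Finset.range n) := by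
    apply Finset.image_congr
    intro i hi
    exact hm i (Finset.mem_range.1 hi)
  rw [himg]
  have hinj : Set.InjOn (fEl s) (Finset.range n) := by
    intro i hi i' hi' he
    simp only [Finset.coe_range, Set.mem_Iio] at hi hi'
    by_contra hne
    rcases Nat.lt_or_ge i i' with h | h
    · have := fEl_strictMono hcard h hi'; omega
    · have := fEl_strictMono hcard (by omega : i' < i) hi; omega
  apply Finset.eq_of_subset_of_card_le
  · intro x hx
    obtain ⟨i, hi, rfl⟩ := Finset.mem_image.1 hx
    exact fEl_mem hcard (Finset.mem_range.1 hi)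
  · rw [Finset.card_image_of_injOn hinj, Finset.card_range, hcard]

end gapstruct

lemma psiF_card (n : ℕ) (l : ℕ →₀ ℕ) : (psiF n l).card = n := by
  rw [psiF, Finset.card_image_of_injOn, Finset.card_range]
  intro i hi i' hi' he
  simp only [Finset.coe_range, Set.mem_Iio] at hi hi'
  by_contra hne
  rcases Nat.lt_or_ge i i' with h | h
  · have := mFun_gap n (jdiv l) h; omega
  · have := mFun_gap n (jdiv l) (by omega : i' < i); omega

lemma phiF_psiF (n : ℕ) (l : ℕ →₀ ℕ) (hsupp : l.support ⊆ Finset.range n)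
    (hdvd : ∀ k ∈ Finset.range n, (k + 1) ∣ l k) :
    phiF n (psiF n l) = l := by
  have hfEl : ∀ i < n, fEl (psiF n l) i = mFun n (jdiv l) i := by
    apply fEl_unique (psiF_card n l)
    · intro i hi
      exact Finset.mem_image_of_mem _ (Finset.mem_range.2 hi)
    · intro i i' hii _
      have := mFun_gap n (jdiv l) hii
      omega
  ext k
  rw [phiF_apply]
  by_cases hk : k < n
  · rw [if_pos hk]
    by_cases hkn : k + 1 = n
    · have hk0 : k = n - 1 := by omega
      rw [jOf, if_pos hkn, hfEl 0 (by omega)]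
      have h0 : Finset.Ico (n - 1 - 0) n = {n - 1} := by ext x; simp; omega
      rw [mFun, aFun, h0, Finset.sum_singleton]
      have h3 : 2 * 0 + 1 + jdiv l (n - 1) - 1 = jdiv l (n - 1) := by omega
      rw [h3, hk0, jdiv]
      have hdv : (n - 1) + 1 ∣ l (n - 1) := hdvd (n - 1) (Finset.mem_range.2 (by omega))
      exact Nat.mul_div_cancel' hdv
    · rw [jOf, if_neg hkn, hfEl (n - 1 - k) (by omega), hfEl (n - 2 - k) (by omega)]
      have e1 : n - 1 - (n - 1 - k) = k := by omega
      have e2 : n - 1 - (n - 2 - k) = k + 1 := by omega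
      have hsplit : Finset.Ico k n = insert k (Finset.Ico (k + 1) n) := by
        ext x; simp; omega
      have hub : mFun n (jdiv l) (n - 1 - k) = mFun n (jdiv l) (n - 2 - k) + 2 + jdiv l k := by
        rw [mFun, mFun, aFun, aFun, e1, e2, hsplit, Finset.sum_insert (by simp)]
        omega
      rw [hub]
      have h4 : mFun n (jdiv l) (n - 2 - k) + 2 + jdiv l k - mFun n (jdiv l) (n - 2 - k) - 2
          = jdiv l k := by omega
      rw [h4, jdiv]
      exact Nat.mul_div_cancel' (hdvd k (Finset.mem_range.2 hk))
  · rw [if_neg hk]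
    symm
    by_contra h
    have h1 : k ∈ l.support := Finsupp.mem_support_iff.2 h
    have h2 := hsupp h1
    simp only [Finset.mem_range] at h2
    omega

/-! ### counting -/

noncomputable def TT (d : ℕ) : Finset (Finset ℕ) :=
  ((Finset.range (d + 1)).powerset).filter fun s =>
    (∀ x ∈ s, 1 ≤ x) ∧
    (∀ x ∈ s, ∀ y ∈ s, x ≠ y → 2 ≤ ((x : ℤ) - y).natAbs) ∧
    ∑ x ∈ s, x = d

noncomputable def gapSets (d n : ℕ) : Finset (Finset ℕ) :=
  (TT d).filter fun s => s.card = n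

lemma gapPartitions_eq (d : ℕ) : gapPartitions d = (TT d).card := by
  rw [gapPartitions, ← Nat.card_eq_finsetCard]
  apply Nat.card_congr
  apply Equiv.subtypeEquivRight
  intro s
  simp only [TT, Finset.mem_filter, Finset.mem_powerset]
  constructor
  · rintro ⟨h1, h2, h3⟩
    refine ⟨fun x hx => Finset.mem_range.2 ?_, h1, h2, h3⟩
    have hx2 : x ≤ ∑ y ∈ s, y := Finset.single_le_sum (fun y _ => Nat.zero_le y) hx
    omega
  · rintro ⟨_, h⟩; exact h

lemma TT_card (d : ℕ) : (TT d).card = ∑ n ∈ Finset.range (d + 1), (gapSets d n).card := by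
  unfold gapSets
  apply Finset.card_eq_sum_card_fiberwise
  intro s hs
  simp only [TT, Finset.mem_coe, Finset.mem_filter, Finset.mem_powerset] at hs
  obtain ⟨hsub, hpos, hgap, hsum⟩ := hs
  simp only [Finset.mem_coe, Finset.mem_range]
  have h1 : s.card = ∑ _x ∈ s, 1 := by simp
  have h2 : ∑ x ∈ s, 1 ≤ ∑ x ∈ s, x := Finset.sum_le_sum hpos
  omega

lemma gapSets_empty (d n : ℕ) (h : d < n ^ 2) : gapSets d n = ∅ := by
  rw [Finset.eq_empty_iff_forall_notMem]
  intro s hs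
  simp only [gapSets, TT, Finset.mem_filter, Finset.mem_powerset] at hs
  obtain ⟨⟨hsub, hpos, hgap, hsum⟩, hcard⟩ := hs
  have h1 : ∑ i ∈ Finset.range n, (2 * i + 1) ≤ ∑ i ∈ Finset.range n, fEl s i :=
    Finset.sum_le_sum fun i hi => fEl_lb hpos hgap hcard i (Finset.mem_range.1 hi)
  rw [sum_odd, fEl_sum hcard, hsum] at h1
  omega

lemma card_gapSets (d n : ℕ) (hn : n ^ 2 ≤ d) :
    (gapSets d n).card = (AA n (d - n ^ 2)).card := by
  apply Finset.card_bij' (fun s _ => phiF n s) (fun l _ => psiF n l)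
  · -- phiF maps into AA
    intro s hs
    simp only [gapSets, TT, Finset.mem_filter, Finset.mem_powerset] at hs
    obtain ⟨⟨hsub, hpos, hgap, hsum⟩, hcard⟩ := hs
    simp only [AA, Finset.mem_filter, Finset.mem_finsuppAntidiag]
    refine ⟨⟨?_, ?_⟩, ?_⟩
    · rw [Finset.sum_congr rfl (fun k _ => rfl), phiF_sum hpos hgap hcard, hsum]
    · exact Finsupp.support_onFinset_subset
    · intro k hk
      rw [phiF_apply, if_pos (Finset.mem_range.1 hk)]
      exact dvd_mul_right _ _
  · -- psiF maps into gapSets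
    intro l hl
    simp only [AA, Finset.mem_filter, Finset.mem_finsuppAntidiag] at hl
    obtain ⟨⟨hsuml, hsupp⟩, hdvd⟩ := hl
    have hsum : ∑ x ∈ psiF n l, x = d := by
      rw [psiF, Finset.sum_image]
      · rw [sum_mFun]
        have : ∑ k ∈ Finset.range n, (k + 1) * jdiv l k = ∑ k ∈ Finset.range n, l k := by
          apply Finset.sum_congr rfl
          intro k hk
          exact Nat.mul_div_cancel' (hdvd k hk)
        rw [this, hsuml]
        omega
      · intro i hi i' hi' he
        by_contra hne
        rcases Nat.lt_or_ge i i' with h | h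
        · have := mFun_gap n (jdiv l) h; omega
        · have := mFun_gap n (jdiv l) (by omega : i' < i); omega
    simp only [gapSets, TT, Finset.mem_filter, Finset.mem_powerset]
    refine ⟨⟨?_, ?_, ?_, ?_⟩, psiF_card n l⟩
    · intro x hx
      have hx2 : x ≤ ∑ y ∈ psiF n l, y := Finset.single_le_sum (fun y _ => Nat.zero_le y) hx
      rw [hsum] at hx2
      exact Finset.mem_range.2 (by omega)
    · intro x hx
      obtain ⟨i, hi, rfl⟩ := Finset.mem_image.1 hx
      rw [mFun]; omega
    · intro x hx y hy hxy
      obtain ⟨i, hi, rfl⟩ := Finset.mem_image.1 hx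
      obtain ⟨i', hi', rfl⟩ := Finset.mem_image.1 hy
      have hne : i ≠ i' := fun h => hxy (by rw [h])
      rcases Nat.lt_or_ge i i' with h | h
      · have := mFun_gap n (jdiv l) h; omega
      · have := mFun_gap n (jdiv l) (by omega : i' < i); omega
    · exact hsum
  · -- left inverse
    intro s hs
    simp only [gapSets, TT, Finset.mem_filter, Finset.mem_powerset] at hs
    obtain ⟨⟨hsub, hpos, hgap, hsum⟩, hcard⟩ := hs
    exact psiF_phiF hpos hgap hcard
  · -- right inverse
    intro l hl
    simp only [AA, Finset.mem_filter, Finset.mem_finsuppAntidiag] at hl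
    exact phiF_psiF n l hl.1.2 hl.2

/-- The Rogers–Ramanujan sum side: `Σ_{n≥0} q^{n²}/(q)_n = Σ_{d≥0} D(d) q^d`,
where `D(d)` counts partitions of `d` into parts with pairwise differences `≥ 2`.
Coefficient-wise: since `q^{n²}/(q)_n` has no `q^d`-term once `n² > d`, the sum
over all `n ≥ 0` of the `q^d`-coefficients reduces to the finite sum over
`n ≤ d`. -/
theorem rogers_ramanujan_sum_side (d : ℕ) :
    (gapPartitions d : ℚ) =
      ∑ n ∈ Finset.range (d + 1),
        PowerSeries.coeff (R := ℚ) d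
          ((X : PowerSeries ℚ) ^ (n ^ 2) *
            (∏ k ∈ Finset.range n, (1 - (X : PowerSeries ℚ) ^ (k + 1)))⁻¹) := by
  rw [gapPartitions_eq, TT_card]
  push_cast
  apply Finset.sum_congr rfl
  intro n _
  rw [coeff_term]
  by_cases h : n ^ 2 ≤ d
  · rw [if_pos h, card_gapSets d n h]
  · rw [if_neg h, gapSets_empty d n (by omega), Finset.card_empty, Nat.cast_zero]
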